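/- If G is a connected graph on n ≥ 3 vertices with diameter D, then μ(G)^{D-1} + μ(G)^D ≥ n, where μ(G) is the largest adjacency eigenvalue. -/

import Mathlib

open Classical in
noncomputable def adjMat {V : Type*} [Fintype V] (G : SimpleGraph V) :
    Matrix V V ℝ :=
  Matrix.of fun i j => if G.Adj i j then 1 else 0

def IsAdjEigenvalue {V : Type*} [Fintype V] (A : Matrix V V ℝ) (μ : ℝ) : Prop :=
  ∃ x : V → ℝ, x ≠ 0 ∧ A.mulVec x = μ • x

def IsMaxAdjEigenvalue {V : Type*} [Fintype V] (A : Matrix V V ℝ) (μ : ℝ) : Prop :=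
  IsAdjEigenvalue A μ ∧ ∀ ν, IsAdjEigenvalue A ν → ν ≤ μ

def IsMinAdjEigenvalue {V : Type*} [Fintype V] (A : Matrix V V ℝ) (μ : ℝ) : Prop :=
  IsAdjEigenvalue A μ ∧ ∀ ν, IsAdjEigenvalue A ν → μ ≤ ν

open Matrix

lemma walk_pad {V : Type*} (G : SimpleGraph V) {u v w : V} (h : G.Adj u w)
    (p : G.Walk u v) (m : ℕ) : ∃ q : G.Walk u v, q.length = p.length + 2 * m := by
  induction m with
  | zero => exact ⟨p, by omega⟩
  | succ m ih =>
    obtain ⟨q, hq⟩ := ih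
    exact ⟨.cons h (.cons h.symm q), by simp [SimpleGraph.Walk.length_cons, hq]; omega⟩

lemma exists_neighbor {n : ℕ} (hn : 3 ≤ n) (G : SimpleGraph (Fin n)) (hG : G.Connected)
    (u : Fin n) : ∃ w, G.Adj u w := by
  obtain ⟨v, hv⟩ := Fintype.exists_ne_of_one_lt_card (by simp; omega) u
  have hr : G.Reachable u v := hG u v
  obtain ⟨p⟩ := hr
  cases p with
  | nil => exact absurd rfl hv.symm
  | cons h q => exact ⟨_, h⟩

lemma exists_walk_DD {n : ℕ} (hn : 3 ≤ n) (G : SimpleGraph (Fin n)) (hG : G.Connected)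
    (D : ℕ) (hD1 : ∀ u v, G.dist u v ≤ D) (u v : Fin n) :
    ∃ k, (k = D - 1 ∨ k = D) ∧ ∃ p : G.Walk u v, p.length = k := by
  obtain ⟨w, hw⟩ := exists_neighbor hn G hG u
  obtain ⟨p, hp⟩ := hG.exists_walk_length_eq_dist u v
  have hd : G.dist u v ≤ D := hD1 u v
  rcases Nat.even_or_odd (D - G.dist u v) with he | ho
  · obtain ⟨q, hq⟩ := walk_pad G hw p ((D - G.dist u v) / 2)
    refine ⟨D, Or.inr rfl, q, ?_⟩
    rw [hq, hp]
    rcases he with ⟨c, hc⟩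
    omega
  · obtain ⟨q, hq⟩ := walk_pad G hw p ((D - 1 - G.dist u v) / 2)
    refine ⟨D - 1, Or.inl rfl, q, ?_⟩
    rw [hq, hp]
    rcases ho with ⟨c, hc⟩
    omega

section spec
variable {n : ℕ} (A : Matrix (Fin n) (Fin n) ℝ) (hA : A.IsHermitian)

lemma pow_spectral (k : ℕ) :
    A ^ k = (hA.eigenvectorUnitary : Matrix (Fin n) (Fin n) ℝ) *
      diagonal (fun i => hA.eigenvalues i ^ k) *
      star (hA.eigenvectorUnitary : Matrix (Fin n) (Fin n) ℝ) := by
  set U := (hA.eigenvectorUnitary : Matrix (Fin n) (Fin n) ℝ)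
  have hUU : U * star U = 1 := Matrix.mem_unitaryGroup_iff.mp hA.eigenvectorUnitary.2
  have hUU' : star U * U = 1 := Matrix.mem_unitaryGroup_iff'.mp hA.eigenvectorUnitary.2
  have hconj : ∀ B C : Matrix (Fin n) (Fin n) ℝ,
      (U * B * star U) * (U * C * star U) = U * (B * C) * star U := by
    intro B C
    have h1 : star U * (U * C * star U) = C * star U := by
      rw [← mul_assoc, ← mul_assoc, hUU', one_mul]
    rw [mul_assoc (U * B), h1, ← mul_assoc, mul_assoc U B C]
  have hspec : A = U * diagonal hA.eigenvalues * star U := by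
    have h2 : (RCLike.ofReal ∘ hA.eigenvalues : Fin n → ℝ) = hA.eigenvalues := by
      funext i; simp
    have := hA.spectral_theorem
    rw [h2] at this
    exact this
  induction k with
  | zero =>
    rw [pow_zero, show (diagonal fun i => hA.eigenvalues i ^ 0) = (1 : Matrix (Fin n) (Fin n) ℝ)
      by simp, mul_one, hUU]
  | succ k ih =>
    rw [pow_succ, ih]
    have step : (U * diagonal fun i => hA.eigenvalues i ^ k) * star U * A
        = (U * (diagonal fun i => hA.eigenvalues i ^ k) * star U)
          * (U * diagonal hA.eigenvalues * star U) := by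
      rw [← hspec, mul_assoc U, ← mul_assoc]
    rw [step, hconj, diagonal_mul_diagonal]
    simp [pow_succ]

lemma quad_spectral (k : ℕ) (w : Fin n → ℝ) :
    w ⬝ᵥ ((A ^ k) *ᵥ w) = ∑ i, hA.eigenvalues i ^ k *
      ((star (hA.eigenvectorUnitary : Matrix (Fin n) (Fin n) ℝ) *ᵥ w) i) ^ 2 := by
  set U := (hA.eigenvectorUnitary : Matrix (Fin n) (Fin n) ℝ)
  have hsU : star U = Uᵀ := by
    ext i j; simp [Matrix.star_eq_conjTranspose, Matrix.conjTranspose_apply]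
  rw [pow_spectral A hA k]
  rw [← Matrix.mulVec_mulVec, ← Matrix.mulVec_mulVec, Matrix.dotProduct_mulVec w U,
    ← Matrix.mulVec_transpose, ← hsU]
  set z := star U *ᵥ w
  simp [dotProduct, Matrix.mulVec_diagonal]
  exact Finset.sum_congr rfl fun i _ => by ring

lemma norm_spectral (w : Fin n → ℝ) :
    ∑ i, ((star (hA.eigenvectorUnitary : Matrix (Fin n) (Fin n) ℝ) *ᵥ w) i) ^ 2
      = w ⬝ᵥ w := by
  have h := quad_spectral A hA 0 w
  simpa [Matrix.one_mulVec] using h.symm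

end spec


theorem stmt3 {n : ℕ} (hn : 3 ≤ n) (G : SimpleGraph (Fin n)) (hG : G.Connected)
    (D : ℕ) (hD1 : ∀ u v, G.dist u v ≤ D) (hD2 : ∃ u v, G.dist u v = D)
    (μ : ℝ) (hmax : IsMaxAdjEigenvalue (adjMat G) μ) :
    μ ^ (D - 1) + μ ^ D ≥ (n : ℝ) := by
  classical
  obtain ⟨hEig, hUB⟩ := hmax
  set A := adjMat G with hAdef
  have hAsym : A.IsHermitian := by
    ext i j
    simp [hAdef, adjMat, Matrix.conjTranspose_apply, G.adj_comm]
  set lam := hAsym.eigenvalues with hlam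
  set U := (hAsym.eigenvectorUnitary : Matrix (Fin n) (Fin n) ℝ) with hUdef
  -- all Hermitian eigenvalues are ≤ μ
  have hlamle : ∀ i, lam i ≤ μ := by
    intro i
    apply hUB
    refine ⟨⇑(hAsym.eigenvectorBasis i), ?_, hAsym.mulVec_eigenvectorBasis i⟩
    intro h0
    exact hAsym.eigenvectorBasis.orthonormal.ne_zero i (by ext j; exact congrFun h0 j)
  -- Rayleigh upper bound
  have hray : ∀ w : Fin n → ℝ, w ⬝ᵥ (A *ᵥ w) ≤ μ * (w ⬝ᵥ w) := by
    intro w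
    have h1 := quad_spectral A hAsym 1 w
    rw [pow_one] at h1
    rw [h1, ← norm_spectral A hAsym w, Finset.mul_sum]
    apply Finset.sum_le_sum
    intro i _
    have h2 := sq_nonneg ((star U *ᵥ w) i)
    have h3 := hlamle i
    nlinarith
  -- entries of A are nonnegative
  have hAnn : ∀ a b, 0 ≤ A a b := by
    intro a b
    simp only [hAdef, adjMat, Matrix.of_apply]
    split <;> norm_num
  have hnpos : (0 : ℝ) < n := by positivity
  -- μ is nonnegative
  have hmu0 : 0 ≤ μ := by
    have h := hray (fun _ => 1)
    have hql : (0 : ℝ) ≤ (fun _ => (1 : ℝ)) ⬝ᵥ (A *ᵥ fun _ => 1) := by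
      simp only [dotProduct, Matrix.mulVec, mul_one, one_mul]
      exact Finset.sum_nonneg fun u _ => Finset.sum_nonneg fun v _ => hAnn u v
    have hqr : (fun _ => (1 : ℝ)) ⬝ᵥ (fun _ => (1 : ℝ) : Fin n → ℝ) = (n : ℝ) := by
      simp [dotProduct]
    rw [hqr] at h
    nlinarith
  -- |eigenvalue| ≤ μ
  have habs : ∀ i, |lam i| ≤ μ := by
    intro i
    set x := ⇑(hAsym.eigenvectorBasis i) with hxdef
    have hEx : A *ᵥ x = lam i • x := hAsym.mulVec_eigenvectorBasis i
    have hxne : x ≠ 0 := by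
      intro h0
      exact hAsym.eigenvectorBasis.orthonormal.ne_zero i (by ext j; exact congrFun h0 j)
    have hxx : 0 < x ⬝ᵥ x := by
      have hsq : x ⬝ᵥ x = ∑ j, x j ^ 2 := by
        simp [dotProduct, sq]
      obtain ⟨j, hj⟩ := Function.ne_iff.mp hxne
      rw [hsq]
      exact Finset.sum_pos' (fun l _ => sq_nonneg _)
        ⟨j, Finset.mem_univ j, lt_of_le_of_ne (sq_nonneg _) (Ne.symm (pow_ne_zero 2 hj))⟩
    have hup : lam i * (x ⬝ᵥ x) ≤ μ * (x ⬝ᵥ x) := by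
      have h := hray x
      rwa [hEx, dotProduct_smul, smul_eq_mul] at h
    set y : Fin n → ℝ := fun j => |x j| with hydef
    have h1 : -(x ⬝ᵥ (A *ᵥ x)) ≤ y ⬝ᵥ (A *ᵥ y) := by
      simp only [dotProduct, Matrix.mulVec, ← Finset.sum_neg_distrib]
      apply Finset.sum_le_sum
      intro j _
      rw [Finset.mul_sum, Finset.mul_sum, ← Finset.sum_neg_distrib]
      apply Finset.sum_le_sum
      intro l _
      have hjl := hAnn j l
      calc -(x j * (A j l * x l)) ≤ |x j * (A j l * x l)| := neg_le_abs _
        _ = y j * (A j l * y l) := by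
            rw [abs_mul, abs_mul, abs_of_nonneg hjl]
    have h2 := hray y
    have h3 : y ⬝ᵥ y = x ⬝ᵥ x := by
      simp [dotProduct, hydef, abs_mul_abs_self]
    have hdown : -(lam i) * (x ⬝ᵥ x) ≤ μ * (x ⬝ᵥ x) := by
      have h4 : -(lam i) * (x ⬝ᵥ x) = -(x ⬝ᵥ (A *ᵥ x)) := by
        rw [hEx, dotProduct_smul, smul_eq_mul]; ring
      rw [h4]
      calc -(x ⬝ᵥ (A *ᵥ x)) ≤ y ⬝ᵥ (A *ᵥ y) := h1
        _ ≤ μ * (y ⬝ᵥ y) := h2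
        _ = μ * (x ⬝ᵥ x) := by rw [h3]
    rw [abs_le]
    constructor
    · have := (mul_le_mul_iff_of_pos_right hxx).mp hdown
      linarith
    · exact hlamle i
  -- A is the adjacency matrix
  have hGadj : A = G.adjMatrix ℝ := by
    ext i j
    by_cases h : G.Adj i j <;> simp [hAdef, adjMat, SimpleGraph.adjMatrix, h]
  -- entries of powers are nonnegative
  have hpow_nn : ∀ (k : ℕ) (u v : Fin n), 0 ≤ (A ^ k) u v := by
    intro k u v
    rw [hGadj, SimpleGraph.adjMatrix_pow_apply_eq_card_walk]
    exact Nat.cast_nonneg _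
  -- key entrywise lower bound
  have hent : ∀ u v, 1 ≤ (A ^ (D - 1)) u v + (A ^ D) u v := by
    intro u v
    obtain ⟨k, hk, p, hp⟩ := exists_walk_DD hn G hG D hD1 u v
    have hcard : (1 : ℝ) ≤ (A ^ k) u v := by
      rw [hGadj, SimpleGraph.adjMatrix_pow_apply_eq_card_walk]
      have hpos : 0 < Fintype.card {q : G.Walk u v | q.length = k} :=
        Fintype.card_pos_iff.mpr ⟨⟨p, hp⟩⟩
      exact_mod_cast hpos
    rcases hk with hk | hk
    · rw [hk] at hcard; have := hpow_nn D u v; linarith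
    · rw [hk] at hcard; have := hpow_nn (D - 1) u v; linarith
  set o : Fin n → ℝ := fun _ => 1 with hodef
  have hone : o ⬝ᵥ o = (n : ℝ) := by simp [hodef, dotProduct]
  -- lower bound for the quadratic form
  have hQlow : (n : ℝ) * n ≤ o ⬝ᵥ ((A ^ (D - 1)) *ᵥ o) + o ⬝ᵥ ((A ^ D) *ᵥ o) := by
    have hsum : o ⬝ᵥ ((A ^ (D - 1)) *ᵥ o) + o ⬝ᵥ ((A ^ D) *ᵥ o)
        = ∑ u, ∑ v, ((A ^ (D - 1)) u v + (A ^ D) u v) := by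
      simp [dotProduct, Matrix.mulVec, hodef, Finset.sum_add_distrib]
    rw [hsum]
    calc (n : ℝ) * n = ∑ _u : Fin n, ∑ _v : Fin n, (1 : ℝ) := by simp
      _ ≤ _ := by
        apply Finset.sum_le_sum
        intro u _
        apply Finset.sum_le_sum
        intro v _
        exact hent u v
  -- upper bound for the quadratic form
  have key : ∀ k : ℕ, o ⬝ᵥ ((A ^ k) *ᵥ o) ≤ μ ^ k * n := by
    intro k
    rw [quad_spectral A hAsym k o]
    have hrw : μ ^ k * (n : ℝ) = ∑ i, μ ^ k * ((star U *ᵥ o) i) ^ 2 := by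
      rw [← Finset.mul_sum, norm_spectral A hAsym o, hone]
    rw [hrw]
    apply Finset.sum_le_sum
    intro i _
    apply mul_le_mul_of_nonneg_right _ (sq_nonneg _)
    calc lam i ^ k ≤ |lam i ^ k| := le_abs_self _
      _ = |lam i| ^ k := abs_pow _ _
      _ ≤ μ ^ k := pow_le_pow_left₀ (abs_nonneg _) (habs i) k
  have hfin : (n : ℝ) * n ≤ (μ ^ (D - 1) + μ ^ D) * n := by
    have := key (D - 1)
    have := key D
    nlinarith
  have := le_of_mul_le_mul_right hfin hnpos
  linarith
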